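/- Among all unicyclic graphs on n ≥ 4 vertices, the graph S_n′ obtained from the star S_n by adding an edge between two pendant vertices has minimum average eccentricity: for every connected unicyclic graph G on n vertices, ecc(G) ≥ 2 − 1/n = ecc(S_n′). -/
import Mathlib


open SimpleGraph

/-- The eccentricity of a vertex: the maximum distance from it to any other vertex. -/
noncomputable def eccentricity {V : Type*} [Fintype V] (G : SimpleGraph V) (v : V) : ℕ :=
  Finset.univ.sup fun u => G.dist v u

/-- The average eccentricity of a graph. -/
noncomputable def avgEcc {V : Type*} [Fintype V] (G : SimpleGraph V) : ℝ :=
  (∑ v : V, (eccentricity G v : ℝ)) / (Fintype.card V : ℝ)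

/-- The graph `Sₙ'` obtained from the star on `n` vertices with center `0` by adding an
edge between the two pendant vertices `1` and `2`. -/
def starGraphPlusEdge (n : ℕ) : SimpleGraph (Fin n) :=
  SimpleGraph.fromRel (fun i j => (i : ℕ) = 0 ∨ ((i : ℕ) = 1 ∧ (j : ℕ) = 2))

open Finset in
/-- Lower bound on the eccentricity sum of a connected unicyclic graph. -/
lemma unicyclic_ecc_sum_lb {V : Type*} [Fintype V] (G : SimpleGraph V)
    [DecidableRel G.Adj] (hG : G.Connected) {n : ℕ} (hn : 4 ≤ n)
    (hcard : Fintype.card V = n) (hunicyclic : G.edgeFinset.card = n) :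
    2 * n - 1 ≤ ∑ v : V, eccentricity G v := by
  classical
  have hcard1 : 1 < Fintype.card V := by omega
  -- every vertex has eccentricity ≥ 1
  have h1 : ∀ v : V, 1 ≤ eccentricity G v := by
    intro v
    obtain ⟨u, hu⟩ := Fintype.exists_ne_of_one_lt_card hcard1 v
    calc 1 ≤ G.dist v u := hG.pos_dist_of_ne (Ne.symm hu)
    _ ≤ _ := Finset.le_sup (mem_univ u)
  -- at most one vertex has eccentricity ≤ 1
  set A := Finset.univ.filter (fun v : V => eccentricity G v ≤ 1) with hA
  have hA1 : A.card ≤ 1 := by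
    by_contra hc
    push_neg at hc
    obtain ⟨u, hu, w, hw, huw⟩ := Finset.one_lt_card.mp hc
    rw [hA, mem_filter] at hu hw
    have huniv : ∀ x : V, ∀ hx : eccentricity G x ≤ 1, ∀ y : V, y ≠ x → G.Adj x y := by
      intro x hx y hy
      have hd : G.dist x y ≤ 1 := le_trans (Finset.le_sup (mem_univ y)) hx
      have hd1 : 1 ≤ G.dist x y := hG.pos_dist_of_ne (Ne.symm hy)
      exact SimpleGraph.dist_eq_one_iff_adj.mp (le_antisymm hd hd1)
    -- degree bounds
    have hdeg : ∀ x : V, ∀ _ : eccentricity G x ≤ 1, n - 1 ≤ G.degree x := by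
      intro x hx
      have : Finset.univ.erase x ⊆ G.neighborFinset x := by
        intro y hy
        rw [mem_erase] at hy
        rw [SimpleGraph.mem_neighborFinset]
        exact huniv x hx y hy.1
      have := Finset.card_le_card this
      rwa [Finset.card_erase_of_mem (mem_univ x), Finset.card_univ, hcard,
        SimpleGraph.card_neighborFinset_eq_degree] at this
    have hdeg2 : ∀ x : V, x ≠ u → x ≠ w → 2 ≤ G.degree x := by
      intro x hxu hxw
      have hsub : ({u, w} : Finset V) ⊆ G.neighborFinset x := by
        intro y hy
        rw [mem_insert, mem_singleton] at hy
        rw [SimpleGraph.mem_neighborFinset]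
        rcases hy with rfl | rfl
        · exact (huniv y hu.2 x hxu).symm
        · exact (huniv y hw.2 x hxw).symm
      have := Finset.card_le_card hsub
      rwa [Finset.card_insert_of_notMem (by simpa using huw), Finset.card_singleton,
        SimpleGraph.card_neighborFinset_eq_degree] at this
    -- degree sum
    have hsum := G.sum_degrees_eq_twice_card_edges
    rw [hunicyclic] at hsum
    have hge : ∀ x : V, 2 + ((if x = u then n - 3 else 0) + (if x = w then n - 3 else 0))
        ≤ G.degree x := by
      intro x
      by_cases hxu : x = u
      · subst hxu
        rw [if_pos rfl, if_neg huw]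
        have := hdeg x hu.2
        omega
      by_cases hxw : x = w
      · subst hxw
        rw [if_neg hxu, if_pos rfl]
        have := hdeg x hw.2
        omega
      · rw [if_neg hxu, if_neg hxw]
        have := hdeg2 x hxu hxw
        omega
    have hle : ∑ x : V, (2 + ((if x = u then n - 3 else 0) + (if x = w then n - 3 else 0)))
        ≤ ∑ x : V, G.degree x := Finset.sum_le_sum fun x _ => hge x
    rw [Finset.sum_add_distrib, Finset.sum_add_distrib, Finset.sum_const, Finset.card_univ,
      hcard, Finset.sum_ite_eq' Finset.univ u (fun _ => n - 3),
      Finset.sum_ite_eq' Finset.univ w (fun _ => n - 3), if_pos (mem_univ u),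
      if_pos (mem_univ w), hsum, smul_eq_mul] at hle
    omega
  -- sum lower bound
  have hsplit := Finset.sum_filter_add_sum_filter_not Finset.univ
    (fun v : V => eccentricity G v ≤ 1) (fun v => eccentricity G v)
  have hcards := Finset.card_filter_add_card_filter_not (s := Finset.univ)
    (p := fun v : V => eccentricity G v ≤ 1)
  rw [Finset.card_univ, hcard] at hcards
  have hb1 : A.card * 1 ≤ ∑ v ∈ A, eccentricity G v := by
    rw [← smul_eq_mul]
    exact Finset.card_nsmul_le_sum _ _ _ (fun x _ => h1 x)
  have hb2 : (Finset.univ.filter (fun v : V => ¬ eccentricity G v ≤ 1)).card * 2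
      ≤ ∑ v ∈ Finset.univ.filter (fun v : V => ¬ eccentricity G v ≤ 1), eccentricity G v := by
    rw [← smul_eq_mul]
    exact Finset.card_nsmul_le_sum _ _ _ (fun x hx => by
      rw [mem_filter] at hx; omega)
  rw [hA] at hA1 hb1
  omega

open Finset in
/-- Eccentricity sum of `Sₙ'`. -/
lemma starGraphPlusEdge_ecc_sum {n : ℕ} (hn : 4 ≤ n) :
    ∑ v : Fin n, (eccentricity (starGraphPlusEdge n) v : ℝ) = 2 * n - 1 := by
  set H := starGraphPlusEdge n with hH
  set z : Fin n := ⟨0, by omega⟩ with hz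
  have hzadj : ∀ v : Fin n, v ≠ z → H.Adj z v := by
    intro v hv
    rw [hH, starGraphPlusEdge, SimpleGraph.fromRel_adj]
    exact ⟨Ne.symm hv, Or.inl (Or.inl rfl)⟩
  have hpre : H.Preconnected := by
    intro a b
    by_cases hab : a = b
    · exact hab ▸ Reachable.refl a
    by_cases ha : a = z
    · subst ha; exact (hzadj b (Ne.symm hab)).reachable
    by_cases hb : b = z
    · subst hb; exact (hzadj a ha).symm.reachable
    · exact ((hzadj a ha).symm.reachable).trans (hzadj b hb).reachable
  haveI : Nonempty (Fin n) := ⟨z⟩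
  have hconn : H.Connected := ⟨hpre⟩
  have hdz : ∀ a : Fin n, H.dist z a ≤ 1 := by
    intro a
    by_cases ha : a = z
    · subst ha; rw [SimpleGraph.dist_self]; exact Nat.zero_le 1
    · exact le_of_eq (SimpleGraph.dist_eq_one_iff_adj.mpr (hzadj a ha))
  have hdle : ∀ a b : Fin n, H.dist a b ≤ 2 := by
    intro a b
    calc H.dist a b ≤ H.dist a z + H.dist z b := hconn.dist_triangle
    _ ≤ 1 + 1 := by
        have := hdz a
        rw [SimpleGraph.dist_comm] at this
        exact add_le_add this (hdz b)
    _ = 2 := rfl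
  have hone : (⟨1, by omega⟩ : Fin n) ≠ z := by
    intro h; rw [Fin.ext_iff] at h; simp at h
  have heccz : eccentricity H z = 1 := by
    apply le_antisymm
    · exact Finset.sup_le fun u _ => hdz u
    · calc 1 = H.dist z ⟨1, by omega⟩ :=
          (SimpleGraph.dist_eq_one_iff_adj.mpr (hzadj _ hone)).symm
      _ ≤ _ := Finset.le_sup (mem_univ _)
  have key : ∀ v u : Fin n, v ≠ u → ¬ H.Adj v u → 2 ≤ H.dist v u := by
    intro v u hvu hadj
    have h0 : H.dist v u ≠ 0 := (hconn.pos_dist_of_ne hvu).ne'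
    have h1 : H.dist v u ≠ 1 := fun h => hadj (SimpleGraph.dist_eq_one_iff_adj.mp h)
    omega
  have hadjval : ∀ a b : Fin n, H.Adj a b →
      ((a:ℕ) = 0 ∨ ((a:ℕ) = 1 ∧ (b:ℕ) = 2) ∨ (b:ℕ) = 0 ∨ ((b:ℕ) = 1 ∧ (a:ℕ) = 2)) := by
    intro a b h
    rw [hH, starGraphPlusEdge, SimpleGraph.fromRel_adj] at h
    tauto
  have heccv : ∀ v : Fin n, v ≠ z → eccentricity H v = 2 := by
    intro v hv
    have hv0 : (v : ℕ) ≠ 0 := by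
      intro h; exact hv (Fin.ext h)
    apply le_antisymm
    · exact Finset.sup_le fun u _ => hdle v u
    · rcases le_or_gt (v : ℕ) 2 with h2 | h2
      · -- use u = 3
        set u : Fin n := ⟨3, by omega⟩ with hu
        have huval : (u : ℕ) = 3 := rfl
        have hvu : v ≠ u := by
          intro h; rw [Fin.ext_iff] at h; omega
        have hadj : ¬ H.Adj v u := by
          intro h; have := hadjval v u h; omega
        calc 2 ≤ H.dist v u := key v u hvu hadj
        _ ≤ _ := Finset.le_sup (mem_univ _)
      · -- use u = 1
        set u : Fin n := ⟨1, by omega⟩ with hu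
        have huval : (u : ℕ) = 1 := rfl
        have hvu : v ≠ u := by
          intro h; rw [Fin.ext_iff] at h; omega
        have hadj : ¬ H.Adj v u := by
          intro h; have := hadjval v u h; omega
        calc 2 ≤ H.dist v u := key v u hvu hadj
        _ ≤ _ := Finset.le_sup (mem_univ _)
  have : ∀ v : Fin n, (eccentricity H v : ℝ) = 2 - (if v = z then 1 else 0) := by
    intro v
    by_cases hv : v = z
    · subst hv; rw [heccz, if_pos rfl]; norm_num
    · rw [heccv v hv, if_neg hv]; norm_num
  rw [Finset.sum_congr rfl fun v _ => this v, Finset.sum_sub_distrib, Finset.sum_const,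
    Finset.card_univ, Fintype.card_fin, Finset.sum_ite_eq' Finset.univ z (fun _ => (1:ℝ)),
    if_pos (mem_univ z), nsmul_eq_mul, mul_comm]

/-- Among connected unicyclic graphs (connected graphs with `n` vertices and `n` edges)
on `n ≥ 4` vertices, the graph `Sₙ'` has minimum average eccentricity:
`ecc G ≥ 2 - 1/n = ecc Sₙ'`. -/
theorem unicyclic_min_avgEcc {V : Type*} [Fintype V] (G : SimpleGraph V)
    [DecidableRel G.Adj] (hG : G.Connected) {n : ℕ} (hn : 4 ≤ n)
    (hcard : Fintype.card V = n) (hunicyclic : G.edgeFinset.card = n) :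
    2 - 1 / (n : ℝ) ≤ avgEcc G ∧
    avgEcc (starGraphPlusEdge n) = 2 - 1 / (n : ℝ) := by
  have hn0 : (0:ℝ) < n := by positivity
  constructor
  · have hlb := unicyclic_ecc_sum_lb G hG hn hcard hunicyclic
    have hlbR : (2 * n - 1 : ℝ) ≤ ∑ v : V, (eccentricity G v : ℝ) := by
      rw [← Nat.cast_sum]
      calc (2 * n - 1 : ℝ) ≤ ((2 * n - 1 : ℕ) : ℝ) := by
            push_cast [Nat.cast_sub (by omega : 1 ≤ 2 * n)]; ring_nf; rfl
      _ ≤ _ := Nat.cast_le.mpr hlb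
    rw [avgEcc, hcard]
    calc (2 - 1 / (n:ℝ)) = (2 * n - 1) / n := by field_simp
    _ ≤ _ := by gcongr
  · rw [avgEcc, starGraphPlusEdge_ecc_sum hn, Fintype.card_fin]
    field_simp
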